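/- Let σ² > 0, 0 < c < 1/2, and δ ≥ 0. Define ψ(x) = x − log(x) for x > 0 and, for a parameter a > 0, φ_a(γ) = (γ + σ²)(γ + σ²a)/γ for γ > 0. Define, for γ > 0, G_∞(γ) = ψ(φ_c(γ + δ/2)/σ²) − (1/2)·ψ(φ_{2c}(γ)/σ²) − (1/2)·ψ(φ_{2c}(γ + δ)/σ²). Then G_∞(γ) = −c + O(1/γ) as γ → +∞; that is, there exist constants C > 0 and γ₀ > 0 such that |G_∞(γ) + c| ≤ C/γ for all γ ≥ γ₀. -/

import Mathlib

private lemma log_phi_expand (g s a : ℝ) (hg : 0 < g) (hs : 0 < s) (h1 : 0 < g + s)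
    (h2 : 0 < g + s * a) :
    Real.log ((g + s) * (g + s * a) / g / s)
      = Real.log (g + s) + Real.log (g + s * a) - Real.log g - Real.log s := by
  rw [Real.log_div (by positivity) hs.ne', Real.log_div (by positivity) hg.ne',
    Real.log_mul h1.ne' h2.ne']

private lemma log_split (g b : ℝ) (hg : 0 < g) (hb : 0 < b) :
    Real.log b = Real.log (b / g) + Real.log g := by
  rw [Real.log_div hb.ne' hg.ne']; ring

private lemma ell_bound (g b a K : ℝ) (hg : 0 < g) (ha : 0 ≤ a) (hb : b = g + a)
    (hK : a ≤ K) : |Real.log (b / g)| ≤ K / g := by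
  subst hb
  have h1 : (1:ℝ) ≤ (g + a) / g := by rw [le_div_iff₀ hg]; linarith
  rw [abs_of_nonneg (Real.log_nonneg h1)]
  have h2 := Real.log_le_sub_one_of_pos (lt_of_lt_of_le one_pos h1)
  have h3 : (g + a) / g - 1 = a / g := by field_simp; ring
  have h4 : a / g ≤ K / g := by gcongr
  linarith


set_option maxHeartbeats 2000000 in
/-- with `ψ(x) = x − log x`, `φ_a(γ) = (γ + σ²)(γ + σ²a)/γ` and
`G_∞(γ) = ψ(φ_c(γ + δ/2)/σ²) − (1/2)ψ(φ_{2c}(γ)/σ²) − (1/2)ψ(φ_{2c}(γ + δ)/σ²)`,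
one has `G_∞(γ) = −c + O(1/γ)` as `γ → +∞`: there exist `C > 0` and `γ₀ > 0` such that
`|G_∞(γ) + c| ≤ C/γ` for all `γ ≥ γ₀`. -/
theorem glr_limit_large_snr (s c δ : ℝ) (hs : 0 < s) (hc0 : 0 < c) (hc1 : c < 1 / 2)
    (hδ : 0 ≤ δ) :
    ∀ ψ : ℝ → ℝ, ψ = (fun x => x - Real.log x) →
    ∀ φ : ℝ → ℝ → ℝ, φ = (fun a γ => (γ + s) * (γ + s * a) / γ) →
    ∀ G : ℝ → ℝ, G = (fun γ => ψ (φ c (γ + δ / 2) / s)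
        - (1 / 2) * ψ (φ (2 * c) γ / s) - (1 / 2) * ψ (φ (2 * c) (γ + δ) / s)) →
    ∃ C > 0, ∃ γ₀ > 0, ∀ γ ≥ γ₀, |G γ + c| ≤ C / γ := by
  intro ψ hψ φ hφ G hG
  subst hψ hφ hG
  have hsc : 0 < s * c := mul_pos hs hc0
  have hscs : s * c ≤ s := by nlinarith
  refine ⟨6 * (δ + 2 * s) + 3 * (s * c), by nlinarith, 1, one_pos, ?_⟩
  intro γ hγ
  have hγ0 : (0:ℝ) < γ := lt_of_lt_of_le one_pos hγ
  have hg1 : (0:ℝ) < γ + δ / 2 := by linarith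
  have hg2 : (0:ℝ) < γ + δ := by linarith
  simp only []
  rw [log_phi_expand (γ + δ / 2) s c hg1 hs (by linarith) (by nlinarith),
      log_phi_expand γ s (2 * c) hγ0 hs (by linarith) (by nlinarith),
      log_phi_expand (γ + δ) s (2 * c) hg2 hs (by linarith) (by nlinarith),
      log_split γ (γ + δ / 2 + s) hγ0 (by linarith),
      log_split γ (γ + δ / 2 + s * c) hγ0 (by nlinarith),
      log_split γ (γ + δ / 2) hγ0 hg1,
      log_split γ (γ + s) hγ0 (by linarith),
      log_split γ (γ + s * (2 * c)) hγ0 (by nlinarith),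
      log_split γ (γ + δ + s) hγ0 (by linarith),
      log_split γ (γ + δ + s * (2 * c)) hγ0 (by nlinarith),
      log_split γ (γ + δ) hγ0 hg2]
  have hX : (γ + δ / 2 + s) * (γ + δ / 2 + s * c) / (γ + δ / 2) / s
      - 1 / 2 * ((γ + s) * (γ + s * (2 * c)) / γ / s)
      - 1 / 2 * ((γ + δ + s) * (γ + δ + s * (2 * c)) / (γ + δ) / s) + c
      = s * c / (γ + δ / 2) - s * c / γ - s * c / (γ + δ) := by
    field_simp
    ring
  have b1 := abs_le.mp (ell_bound γ (γ + δ / 2 + s) (δ / 2 + s) (δ + 2 * s) hγ0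
    (by linarith) (by ring) (by linarith))
  have b2 := abs_le.mp (ell_bound γ (γ + δ / 2 + s * c) (δ / 2 + s * c) (δ + 2 * s) hγ0
    (by nlinarith) (by ring) (by linarith))
  have b3 := abs_le.mp (ell_bound γ (γ + δ / 2) (δ / 2) (δ + 2 * s) hγ0
    (by linarith) (by ring) (by linarith))
  have b4 := abs_le.mp (ell_bound γ (γ + s) s (δ + 2 * s) hγ0 hs.le rfl (by linarith))
  have b5 := abs_le.mp (ell_bound γ (γ + s * (2 * c)) (s * (2 * c)) (δ + 2 * s) hγ0
    (by nlinarith) rfl (by nlinarith))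
  have b6 := abs_le.mp (ell_bound γ (γ + δ + s) (δ + s) (δ + 2 * s) hγ0
    (by linarith) (by ring) (by linarith))
  have b7 := abs_le.mp (ell_bound γ (γ + δ + s * (2 * c)) (δ + s * (2 * c)) (δ + 2 * s) hγ0
    (by nlinarith) (by ring) (by nlinarith))
  have b8 := abs_le.mp (ell_bound γ (γ + δ) δ (δ + 2 * s) hγ0 hδ rfl (by linarith))
  have r1 : s * c / (γ + δ / 2) ≤ s * c / γ := by gcongr <;> linarith
  have r2 : s * c / (γ + δ) ≤ s * c / γ := by gcongr <;> linarith
  have r1p : 0 < s * c / (γ + δ / 2) := by positivity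
  have r2p : 0 < s * c / (γ + δ) := by positivity
  have r0p : 0 < s * c / γ := by positivity
  have hCsplit : (6 * (δ + 2 * s) + 3 * (s * c)) / γ
      = 6 * ((δ + 2 * s) / γ) + 3 * (s * c / γ) := by ring
  rw [abs_le, hCsplit]
  constructor <;> linarith [hX, b1.1, b1.2, b2.1, b2.2, b3.1, b3.2, b4.1, b4.2,
    b5.1, b5.2, b6.1, b6.2, b7.1, b7.2, b8.1, b8.2]
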